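/- arXiv:0811.3637 — 2 statements merged into one kernel-verified Lean document; each statement's English description precedes it below -/
import Mathlib

section
/- Let R₁, R₂: ℝ³ → ℂ satisfy |R_j(x)| ≤ C e^{−γ‖x − α_j‖} with γ > 0, where ‖α₂ − α₁‖ = A ≥ 1. Then for every ε ∈ L²(ℝ³), |∫∫ Re(ε(y)\bar R₁(y)) Re(ε(z)\bar R₂(z))/‖y−z‖ dy dz| ≤ C' (1/A + A^{1/2} e^{−A/4}) ‖ε‖²_{L²}. -/
open MeasureTheory Real
noncomputable section
open Metric Set
open scoped ENNReal NNReal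

abbrev E3 := EuclideanSpace ℝ (Fin 3)

lemma pow_div_le_exp (n : ℕ) {x : ℝ} (hx : 0 ≤ x) : (x / n) ^ n ≤ Real.exp x := by
  rcases Nat.eq_zero_or_pos n with h | h
  · simp [h, (Real.exp_pos x).le]
    positivity
  have h1 : x / n ≤ Real.exp (x / n) - 1 + 1 := by
    have := Real.add_one_le_exp (x / n)
    linarith
  have h2 : (x / n) ^ n ≤ (Real.exp (x / n)) ^ n := by
    apply pow_le_pow_left₀ (by positivity)
    have := Real.add_one_le_exp (x / n)
    linarith
  calc (x / n) ^ n ≤ (Real.exp (x / n)) ^ n := h2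
    _ = Real.exp (x / n * n) := by rw [← Real.exp_nat_mul]; ring_nf
    _ = Real.exp x := by
        congr 1
        field_simp

lemma integrable_exp_neg_norm_E3 {b : ℝ} (hb : 0 < b) :
    Integrable (fun x : E3 => Real.exp (-b * ‖x‖)) volume := by
  have hdim : ((Module.finrank ℝ E3 : ℝ)) < (4 : ℝ) := by
    rw [finrank_euclideanSpace_fin]; norm_num
  have hint := integrable_one_add_norm (E := E3) (μ := volume) hdim
  apply Integrable.mono' (hint.const_mul (256 * Real.exp b / b ^ 4))
  · apply Measurable.aestronglyMeasurable
    fun_prop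
  · filter_upwards with x
    rw [Real.norm_eq_abs, abs_of_nonneg (Real.exp_pos _).le]
    have h4 : (b * (1 + ‖x‖) / 4) ^ 4 ≤ Real.exp (b * (1 + ‖x‖)) :=
      pow_div_le_exp 4 (by positivity)
    have hx : (0:ℝ) ≤ ‖x‖ := norm_nonneg _
    have hpow : ((1:ℝ) + ‖x‖) ^ (-(4:ℝ)) = ((1 + ‖x‖) ^ (4:ℕ))⁻¹ := by
      rw [Real.rpow_neg (by positivity), ← Real.rpow_natCast (1 + ‖x‖) 4]
      norm_num
    rw [hpow]
    have hexp : Real.exp (-b * ‖x‖) = Real.exp b / Real.exp (b * (1 + ‖x‖)) := by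
      rw [eq_div_iff (Real.exp_pos _).ne', ← Real.exp_add]
      ring_nf
    have he : Real.exp (b * (1 + ‖x‖)) > 0 := Real.exp_pos _
    have hge : Real.exp (b * (1 + ‖x‖)) ≥ b ^ 4 * (1 + ‖x‖) ^ 4 / 256 := by
      calc Real.exp (b * (1 + ‖x‖)) ≥ (b * (1 + ‖x‖) / 4) ^ 4 := h4
        _ = b ^ 4 * (1 + ‖x‖) ^ 4 / 256 := by ring
    rw [hexp, div_le_iff₀ he]
    have hK : (0:ℝ) ≤ 256 * Real.exp b / b ^ 4 * ((1 + ‖x‖) ^ 4)⁻¹ := by positivity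
    calc Real.exp b
        = (256 * Real.exp b / b ^ 4 * ((1 + ‖x‖) ^ 4)⁻¹) * (b ^ 4 * (1 + ‖x‖) ^ 4 / 256) := by
          field_simp
      _ ≤ _ := mul_le_mul_of_nonneg_left hge hK


lemma riesz_fin :
    ∫⁻ w : E3 in closedBall 0 1, ENNReal.ofReal ‖w‖⁻¹ ∂volume < ⊤ := by
  set V : ℝ≥0∞ := volume (closedBall (0:E3) 1) with hV
  have hVfin : V < ⊤ := measure_closedBall_lt_top
  -- dyadic shells
  set shell : ℕ → Set E3 := fun k =>
    closedBall 0 ((2:ℝ)⁻¹ ^ k) \ closedBall 0 ((2:ℝ)⁻¹ ^ (k+1)) with hshell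
  have hcover : closedBall (0:E3) 1 ⊆ {0} ∪ ⋃ k, shell k := by
    intro w hw
    rcases eq_or_ne w 0 with h | h
    · exact Or.inl h
    right
    have hw0 : 0 < ‖w‖ := norm_pos_iff.mpr h
    have hw1 : ‖w‖ ≤ 1 := mem_closedBall_zero_iff.mp hw
    -- minimal k with 2⁻¹ ^ k < ‖w‖
    have hex : ∃ k : ℕ, (2:ℝ)⁻¹ ^ k < ‖w‖ := by
      obtain ⟨k, hk⟩ := exists_pow_lt_of_lt_one hw0 (by norm_num : (2:ℝ)⁻¹ < 1)
      exact ⟨k, hk⟩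
    classical
    set k := Nat.find hex with hk
    have hklt : (2:ℝ)⁻¹ ^ k < ‖w‖ := Nat.find_spec hex
    have hkpos : k ≠ 0 := by
      intro h0
      rw [h0] at hklt
      simp at hklt
      linarith
    obtain ⟨j, hj⟩ := Nat.exists_eq_succ_of_ne_zero hkpos
    have hjge : ¬ ((2:ℝ)⁻¹ ^ j < ‖w‖) := Nat.find_min hex (by omega)
    push_neg at hjge
    refine mem_iUnion.mpr ⟨j, ?_⟩
    constructor
    · exact mem_closedBall_zero_iff.mpr hjge
    · intro hmem
      have h2 := mem_closedBall_zero_iff.mp hmem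
      have h3 : ‖w‖ ≤ (2:ℝ)⁻¹ ^ k := by rw [hj]; exact h2
      linarith
  calc ∫⁻ w : E3 in closedBall 0 1, ENNReal.ofReal ‖w‖⁻¹ ∂volume
      ≤ ∫⁻ w : E3 in {0} ∪ ⋃ k, shell k, ENNReal.ofReal ‖w‖⁻¹ ∂volume :=
        lintegral_mono_set hcover
    _ ≤ (∫⁻ w : E3 in {(0:E3)}, ENNReal.ofReal ‖w‖⁻¹ ∂volume)
        + ∫⁻ w : E3 in ⋃ k, shell k, ENNReal.ofReal ‖w‖⁻¹ ∂volume :=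
        lintegral_union_le _ _ _
    _ ≤ 0 + ∑' k, ∫⁻ w : E3 in shell k, ENNReal.ofReal ‖w‖⁻¹ ∂volume := by
        gcongr
        · have : volume ({(0:E3)} : Set E3) = 0 := measure_singleton 0
          rw [setLIntegral_measure_zero _ _ this]
        · exact lintegral_iUnion_le _ _
    _ ≤ ∑' k, (ENNReal.ofReal (2 * 4⁻¹ ^ k) * V) := by
        rw [zero_add]
        gcongr with k
        have hb : ∀ w ∈ shell k, ENNReal.ofReal ‖w‖⁻¹ ≤ ENNReal.ofReal ((2:ℝ) ^ (k+1)) := by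
          intro w hw
          apply ENNReal.ofReal_le_ofReal
          have h1 : (2:ℝ)⁻¹ ^ (k+1) < ‖w‖ := by
            by_contra hcon
            push_neg at hcon
            exact hw.2 (mem_closedBall_zero_iff.mpr hcon)
          have h2 : (0:ℝ) < (2:ℝ)⁻¹ ^ (k+1) := by positivity
          rw [inv_le_comm₀ (lt_trans h2 h1) (by positivity)]
          calc ((2:ℝ) ^ (k+1))⁻¹ = (2:ℝ)⁻¹ ^ (k+1) := by rw [inv_pow]
            _ ≤ ‖w‖ := h1.le
        calc ∫⁻ w : E3 in shell k, ENNReal.ofReal ‖w‖⁻¹ ∂volume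
            ≤ ∫⁻ _ : E3 in shell k, ENNReal.ofReal ((2:ℝ) ^ (k+1)) ∂volume :=
              setLIntegral_mono (by fun_prop) hb
          _ = ENNReal.ofReal ((2:ℝ) ^ (k+1)) * volume (shell k) := by
              rw [setLIntegral_const]
          _ ≤ ENNReal.ofReal ((2:ℝ) ^ (k+1)) * volume (closedBall (0:E3) ((2:ℝ)⁻¹ ^ k)) := by
              gcongr
              exact diff_subset
          _ = ENNReal.ofReal ((2:ℝ) ^ (k+1)) *
                (ENNReal.ofReal (((2:ℝ)⁻¹ ^ k) ^ Module.finrank ℝ E3) * V) := by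
              rw [Measure.addHaar_closedBall' _ _ (by positivity)]
          _ = ENNReal.ofReal (2 * 4⁻¹ ^ k) * V := by
              rw [← mul_assoc, ← ENNReal.ofReal_mul (by positivity)]
              have hfr : Module.finrank ℝ E3 = 3 := finrank_euclideanSpace_fin
              have h1k : (2:ℝ)^k * (2:ℝ)⁻¹^k = 1 := by rw [← mul_pow]; norm_num
              have h4k : (4:ℝ)⁻¹^k = (2:ℝ)⁻¹^k * (2:ℝ)⁻¹^k := by rw [← mul_pow]; norm_num
              have key : (2:ℝ)^(k+1) * ((2:ℝ)⁻¹^k)^3 = 2 * 4⁻¹^k := by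
                linear_combination (2 * ((2:ℝ)⁻¹^k)^2) * h1k - 2 * h4k
              rw [hfr, key]
    _ < ⊤ := by
        rw [ENNReal.tsum_mul_right]
        apply ENNReal.mul_lt_top _ hVfin
        have : ∀ k:ℕ, ENNReal.ofReal (2 * 4⁻¹ ^ k) = 2 * (4:ℝ≥0∞)⁻¹ ^ k := by
          intro k
          rw [ENNReal.ofReal_mul (by norm_num), ENNReal.ofReal_pow (by norm_num),
            ENNReal.ofReal_inv_of_pos (by norm_num), ENNReal.ofReal_ofNat]
          norm_num
        simp_rw [this]
        rw [ENNReal.tsum_mul_left]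
        apply ENNReal.mul_lt_top (by norm_num)
        rw [ENNReal.tsum_geometric]
        exact ENNReal.inv_lt_top.mpr (tsub_pos_of_lt (ENNReal.inv_lt_one.mpr (by norm_num)))





set_option maxHeartbeats 2000000 in
/-- Interaction estimate for two exponentially localized profiles at distance `A`: the
Coulomb-type bilinear form is bounded by `C'(1/A + √A e^{−A/4})‖ε‖²_{L²}`. -/
theorem stmt12 (C γ : ℝ) (hC : 0 < C) (hγ : 0 < γ) :
    ∃ C' > (0:ℝ), ∀ (R₁ R₂ : E3 → ℂ) (α₁ α₂ : E3),
      (∀ x, ‖R₁ x‖ ≤ C * Real.exp (-γ * ‖x - α₁‖)) →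
      (∀ x, ‖R₂ x‖ ≤ C * Real.exp (-γ * ‖x - α₂‖)) →
      1 ≤ ‖α₂ - α₁‖ →
      ∀ ε : E3 → ℂ, MemLp ε 2 (volume : Measure E3) →
        |∫ y : E3, ∫ z : E3,
            (ε y * (starRingEnd ℂ) (R₁ y)).re * (ε z * (starRingEnd ℂ) (R₂ z)).re / ‖y - z‖|
          ≤ C' * (1 / ‖α₂ - α₁‖
              + ‖α₂ - α₁‖ ^ ((1:ℝ)/2) * Real.exp (-‖α₂ - α₁‖ / 4))
            * ∫ x : E3, ‖ε x‖ ^ 2 := by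
  -- global constants
  have hE : Integrable (fun x : E3 => Real.exp (-(2*γ) * ‖x‖)) volume :=
    integrable_exp_neg_norm_E3 (by positivity)
  set e2 : ℝ := ∫ x : E3, Real.exp (-(2*γ) * ‖x‖) with he2def
  have he2 : 0 ≤ e2 := integral_nonneg fun x => (Real.exp_pos _).le
  have hEγ : (∫⁻ x : E3, ENNReal.ofReal (Real.exp (-(2*γ) * ‖x‖))) = ENNReal.ofReal e2 :=
    (ofReal_integral_eq_lintegral_ofReal hE
      (Filter.Eventually.of_forall fun x => (Real.exp_pos _).le)).symm
  set IK1 : ℝ≥0∞ := ∫⁻ w : E3 in closedBall 0 1, ENNReal.ofReal ‖w‖⁻¹ ∂volume with hIK1def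
  have hIK1fin : IK1 < ⊤ := riesz_fin
  set ik1 : ℝ := IK1.toReal with hik1def
  have hIK1 : IK1 = ENNReal.ofReal ik1 := (ENNReal.ofReal_toReal hIK1fin.ne).symm
  have hik1 : 0 ≤ ik1 := ENNReal.toReal_nonneg
  set V : ℝ≥0∞ := volume (closedBall (0:E3) 1) with hVdef
  have hVfin : V < ⊤ := measure_closedBall_lt_top
  set v : ℝ := V.toReal with hvdef
  have hVv : V = ENNReal.ofReal v := (ENNReal.ofReal_toReal hVfin.ne).symm
  have hv : 0 ≤ v := ENNReal.toReal_nonneg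
  set D : ℝ := 2*C^2*e2 + 2*C^2*(ik1 + v)*(10/γ)^5 with hDdef
  have hD0 : 0 ≤ D := by
    rw [hDdef]
    have h1 : 0 ≤ 2*C^2*e2 := mul_nonneg (by positivity) he2
    have h2 : 0 ≤ 2*C^2*(ik1 + v)*(10/γ)^5 :=
      mul_nonneg (mul_nonneg (by positivity) (by linarith)) (by positivity)
    linarith
  refine ⟨D + 1, by linarith, ?_⟩
  intro R₁ R₂ α₁ α₂ hR₁ hR₂ hA ε hε
  set A := ‖α₂ - α₁‖ with hAdef
  have hA0 : (0:ℝ) < A := lt_of_lt_of_le one_pos hA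
  -- measurable representative of ε
  obtain ⟨εm, hεmsm, hεmeq⟩ : ∃ g : E3 → ℂ, StronglyMeasurable g ∧ ε =ᵐ[volume] g :=
    ⟨hε.1.mk ε, hε.1.stronglyMeasurable_mk, hε.1.ae_eq_mk⟩
  set n : E3 → ℝ≥0∞ := fun y => ENNReal.ofReal ‖εm y‖ with hndef
  have hnmeas : Measurable n := hεmsm.measurable.norm.ennreal_ofReal
  have hsq : ∀ x : ℝ≥0∞, x ^ (2:ℝ) = x * x := by
    intro x
    rw [show (2:ℝ) = ((2:ℕ):ℝ) by norm_num, ENNReal.rpow_natCast, sq]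
  -- L² mass
  have hInt2 : Integrable (fun x => ‖ε x‖ ^ 2) volume := by
    have h := hε.integrable_norm_rpow two_ne_zero (by norm_num)
    have h2 : ENNReal.toReal 2 = (2:ℝ) := by norm_num
    rw [h2] at h
    apply h.congr
    filter_upwards with x
    rw [← Real.rpow_natCast ‖ε x‖ 2]
    norm_num
  set Iε : ℝ := ∫ x : E3, ‖ε x‖ ^ 2 with hIεdef
  have hIε0 : 0 ≤ Iε := integral_nonneg fun x => by positivity
  have hLε : (∫⁻ y, n y * n y) = ENNReal.ofReal Iε := by
    rw [hIεdef, ofReal_integral_eq_lintegral_ofReal hInt2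
      (Filter.Eventually.of_forall fun x => by positivity)]
    apply lintegral_congr_ae
    filter_upwards [hεmeq] with x hx
    simp only [hndef]
    rw [← ENNReal.ofReal_mul (norm_nonneg _), hx, ← sq]
  -- exponential factors
  set ee₁ : E3 → ℝ≥0∞ := fun y => ENNReal.ofReal (Real.exp (-γ * ‖y - α₁‖)) with hee₁def
  set ee₂ : E3 → ℝ≥0∞ := fun z => ENNReal.ofReal (Real.exp (-γ * ‖z - α₂‖)) with hee₂def
  have hee₁meas : Measurable ee₁ :=
    (Measurable.ennreal_ofReal (by fun_prop))
  have hee₂meas : Measurable ee₂ :=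
    (Measurable.ennreal_ofReal (by fun_prop))
  have heesq : ∀ (α : E3) (y : E3),
      ENNReal.ofReal (Real.exp (-γ * ‖y - α‖)) * ENNReal.ofReal (Real.exp (-γ * ‖y - α‖))
        = ENNReal.ofReal (Real.exp (-(2*γ) * ‖y - α‖)) := by
    intro α y
    rw [← ENNReal.ofReal_mul (Real.exp_pos _).le, ← Real.exp_add]
    congr 1
    ring
  have hEE₁ : (∫⁻ y : E3, ee₁ y * ee₁ y) = ENNReal.ofReal e2 := by
    simp only [hee₁def]
    simp_rw [heesq α₁]
    rw [lintegral_sub_right_eq_self (fun x : E3 => ENNReal.ofReal (Real.exp (-(2*γ) * ‖x‖))) α₁]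
    exact hEγ
  have hEE₂ : (∫⁻ z : E3, ee₂ z * ee₂ z) = ENNReal.ofReal e2 := by
    simp only [hee₂def]
    simp_rw [heesq α₂]
    rw [lintegral_sub_right_eq_self (fun x : E3 => ENNReal.ofReal (Real.exp (-(2*γ) * ‖x‖))) α₂]
    exact hEγ
  -- kernel
  set KK : E3 → ℝ≥0∞ := fun w =>
      (closedBall (0:E3) 1).indicator (fun w => ENNReal.ofReal ‖w‖⁻¹) w
      + (closedBall (0:E3) (A/2)).indicator (1 : E3 → ℝ≥0∞) w with hKKdef
  have hKKmeas : Measurable KK :=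
    ((measurable_norm.inv.ennreal_ofReal).indicator measurableSet_closedBall).add
      (measurable_const.indicator measurableSet_closedBall)
  have hKKsymm : ∀ w : E3, KK (-w) = KK w := by
    intro w
    classical
    simp only [hKKdef]
    rw [Set.indicator_apply, Set.indicator_apply, Set.indicator_apply, Set.indicator_apply]
    simp only [mem_closedBall_zero_iff, norm_neg, Pi.one_apply]
  set IK : ℝ≥0∞ := ∫⁻ w, KK w with hIKdef
  have hIK : IK ≤ ENNReal.ofReal ((ik1 + v) * A^3) := by
    rw [hIKdef, hKKdef]
    beta_reduce
    rw [lintegral_add_left (show Measurable (fun w : E3 =>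
      (closedBall (0:E3) 1).indicator (fun w : E3 => ENNReal.ofReal ‖w‖⁻¹) w) from
      (measurable_norm.inv.ennreal_ofReal).indicator measurableSet_closedBall)]
    rw [lintegral_indicator measurableSet_closedBall, lintegral_indicator_one measurableSet_closedBall]
    rw [Measure.addHaar_closedBall' _ _ (by linarith : (0:ℝ) ≤ A/2)]
    have hfr : Module.finrank ℝ E3 = 3 := finrank_euclideanSpace_fin
    rw [hfr, ← hVdef, ← hIK1def, hIK1, hVv]
    rw [← ENNReal.ofReal_mul (by positivity)]
    have hA3 : (1:ℝ) ≤ A^3 := by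
      nlinarith [mul_nonneg (sub_nonneg.mpr hA) (sq_nonneg A),
        mul_nonneg (sub_nonneg.mpr hA) (by linarith : (0:ℝ) ≤ A)]
    have h1 : ik1 ≤ ik1 * A^3 := by nlinarith [mul_le_mul_of_nonneg_left hA3 hik1]
    have h3 : (A/2)^3 ≤ A^3 := by nlinarith [pow_pos hA0 3]
    have h4 : (A/2)^3 * v ≤ v * A^3 := by
      have := mul_le_mul_of_nonneg_right h3 hv
      linarith
    calc ENNReal.ofReal ik1 + ENNReal.ofReal ((A/2)^3 * v)
        ≤ ENNReal.ofReal (ik1 * A^3) + ENNReal.ofReal (v * A^3) :=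
          add_le_add (ENNReal.ofReal_le_ofReal h1) (ENNReal.ofReal_le_ofReal h4)
      _ = ENNReal.ofReal ((ik1 + v) * A^3) := by
          rw [← ENNReal.ofReal_add (by nlinarith [mul_le_mul_of_nonneg_left hA3 hik1])
            (by nlinarith [mul_le_mul_of_nonneg_left hA3 hv])]
          congr 1
          ring
  have hIKfin : IK < ⊤ := lt_of_le_of_lt hIK ENNReal.ofReal_lt_top
  -- Hölder bounds
  set a : E3 → ℝ≥0∞ := fun y => ENNReal.ofReal C * n y * ee₁ y with hadef
  set b : E3 → ℝ≥0∞ := fun z => ENNReal.ofReal C * n z * ee₂ z with hbdef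
  have hameas : Measurable a := (measurable_const.mul hnmeas).mul hee₁meas
  have hbmeas : Measurable b := (measurable_const.mul hnmeas).mul hee₂meas
  have hafin : ∀ y, a y ≠ ⊤ := fun y =>
    ENNReal.mul_ne_top (ENNReal.mul_ne_top ENNReal.ofReal_ne_top ENNReal.ofReal_ne_top)
      ENNReal.ofReal_ne_top
  have hbfin : ∀ z, b z ≠ ⊤ := fun z =>
    ENNReal.mul_ne_top (ENNReal.mul_ne_top ENNReal.ofReal_ne_top ENNReal.ofReal_ne_top)
      ENNReal.ofReal_ne_top
  set H : ℝ≥0∞ := ENNReal.ofReal C *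
      ((ENNReal.ofReal Iε) ^ ((1:ℝ)/2) * (ENNReal.ofReal e2) ^ ((1:ℝ)/2)) with hHdef
  have hHfin : H ≠ ⊤ := by
    apply ENNReal.mul_ne_top ENNReal.ofReal_ne_top
    apply ENNReal.mul_ne_top
    · exact (ENNReal.rpow_lt_top_of_nonneg (by norm_num) ENNReal.ofReal_ne_top).ne
    · exact (ENNReal.rpow_lt_top_of_nonneg (by norm_num) ENNReal.ofReal_ne_top).ne
  have hholder : ∀ (f g : E3 → ℝ≥0∞), Measurable f → Measurable g →
      (∫⁻ x, f x * g x) ≤ (∫⁻ x, f x * f x) ^ ((1:ℝ)/2) * (∫⁻ x, g x * g x) ^ ((1:ℝ)/2) := by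
    intro f g hf hg
    have h := ENNReal.lintegral_mul_le_Lp_mul_Lq (volume : Measure E3)
      (p := 2) (q := 2) Real.HolderConjugate.two_two hf.aemeasurable hg.aemeasurable
    simp_rw [Pi.mul_apply] at h
    simp_rw [hsq] at h
    exact h
  have hIA : (∫⁻ y, a y) ≤ H := by
    calc (∫⁻ y, a y) = ENNReal.ofReal C * ∫⁻ y, n y * ee₁ y := by
          simp only [hadef]
          simp_rw [mul_assoc]
          exact lintegral_const_mul' _ _ ENNReal.ofReal_ne_top
      _ ≤ ENNReal.ofReal C * ((∫⁻ y, n y * n y) ^ ((1:ℝ)/2) * (∫⁻ y, ee₁ y * ee₁ y) ^ ((1:ℝ)/2)) := by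
          exact mul_le_mul_right (hholder n ee₁ hnmeas hee₁meas) _
      _ = H := by rw [hLε, hEE₁, hHdef]
  have hIB : (∫⁻ z, b z) ≤ H := by
    calc (∫⁻ z, b z) = ENNReal.ofReal C * ∫⁻ z, n z * ee₂ z := by
          simp only [hbdef]
          simp_rw [mul_assoc]
          exact lintegral_const_mul' _ _ ENNReal.ofReal_ne_top
      _ ≤ ENNReal.ofReal C * ((∫⁻ z, n z * n z) ^ ((1:ℝ)/2) * (∫⁻ z, ee₂ z * ee₂ z) ^ ((1:ℝ)/2)) := by
          exact mul_le_mul_right (hholder n ee₂ hnmeas hee₂meas) _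
      _ = H := by rw [hLε, hEE₂, hHdef]
  have hIAfin : (∫⁻ y, a y) ≠ ⊤ := (lt_of_le_of_lt hIA (lt_top_iff_ne_top.mpr hHfin)).ne
  have hIBfin : (∫⁻ z, b z) ≠ ⊤ := (lt_of_le_of_lt hIB (lt_top_iff_ne_top.mpr hHfin)).ne
  -- the majorant
  set c₀ : ℝ≥0∞ := ENNReal.ofReal (2/A) with hc₀def
  set c₂ : ℝ≥0∞ := ENNReal.ofReal (C^2 * Real.exp (-(γ * (A/2)))) with hc₂def
  set M : E3 → E3 → ℝ≥0∞ := fun y z =>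
      c₀ * (a y * b z) + c₂ * ((n y * n y + n z * n z) * KK (y - z)) with hMdef
  have hMprod : Measurable (fun p : E3 × E3 => M p.1 p.2) := by
    simp only [hMdef]
    apply Measurable.add (f := fun p : E3 × E3 => c₀ * (a p.1 * b p.2))
      (g := fun p : E3 × E3 => c₂ * ((n p.1 * n p.1 + n p.2 * n p.2) * KK (p.1 - p.2)))
    · exact measurable_const.mul ((hameas.comp measurable_fst).mul (hbmeas.comp measurable_snd))
    · exact measurable_const.mul
        ((((hnmeas.comp measurable_fst).mul (hnmeas.comp measurable_fst)).add
          ((hnmeas.comp measurable_snd).mul (hnmeas.comp measurable_snd))).mul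
          (hKKmeas.comp (measurable_fst.sub measurable_snd)))
  have hW : ∀ y : E3, (∫⁻ z, KK (y - z)) = IK := by
    intro y
    have h1 : ∀ z : E3, KK (y - z) = KK (z - y) := by
      intro z
      rw [← hKKsymm (z - y), neg_sub]
    simp_rw [h1]
    rw [hIKdef]
    exact lintegral_sub_right_eq_self KK y
  have hnfin : ∀ y, n y * n y ≠ ⊤ := fun y =>
    ENNReal.mul_ne_top ENNReal.ofReal_ne_top ENNReal.ofReal_ne_top
  have hinner : ∀ y : E3, (∫⁻ z, M y z)
      = c₀ * a y * (∫⁻ z, b z)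
        + c₂ * ((n y * n y) * IK + ∫⁻ z, (n z * n z) * KK (y - z)) := by
    intro y
    simp only [hMdef]
    rw [lintegral_add_left (show Measurable (fun z : E3 => c₀ * (a y * b z)) from
      measurable_const.mul (measurable_const.mul hbmeas))]
    congr 1
    · calc (∫⁻ z, c₀ * (a y * b z)) = ∫⁻ z, (c₀ * a y) * b z := by simp_rw [mul_assoc]
        _ = c₀ * a y * ∫⁻ z, b z :=
          lintegral_const_mul' _ _ (ENNReal.mul_ne_top ENNReal.ofReal_ne_top (hafin y))
    · calc (∫⁻ z, c₂ * ((n y * n y + n z * n z) * KK (y - z)))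
          = c₂ * ∫⁻ z, (n y * n y + n z * n z) * KK (y - z) :=
            lintegral_const_mul' _ _ ENNReal.ofReal_ne_top
        _ = c₂ * ((n y * n y) * IK + ∫⁻ z, (n z * n z) * KK (y - z)) := by
            congr 1
            simp_rw [add_mul]
            have hm : Measurable (fun z : E3 => (n y * n y) * KK (y - z)) :=
              measurable_const.mul (hKKmeas.comp (measurable_const.sub measurable_id))
            rw [lintegral_add_left hm]
            congr 1
            rw [lintegral_const_mul' _ _ (hnfin y), hW y]
  have hWW : (∫⁻ y : E3, ∫⁻ z : E3, (n z * n z) * KK (y - z)) = ENNReal.ofReal Iε * IK := by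
    rw [lintegral_lintegral_swap
      ((((hnmeas.comp measurable_snd).mul (hnmeas.comp measurable_snd)).mul
        (hKKmeas.comp (measurable_fst.sub measurable_snd))).aemeasurable)]
    have h1 : ∀ z : E3, (∫⁻ y : E3, (n z * n z) * KK (y - z)) = (n z * n z) * IK := by
      intro z
      rw [lintegral_const_mul' _ _ (hnfin z)]
      congr 1
      exact lintegral_sub_right_eq_self KK z
    simp_rw [h1]
    rw [lintegral_mul_const' _ _ hIKfin.ne, hLε]
  have hJ1 : (∫⁻ y : E3, ∫⁻ z : E3, M y z)
      ≤ c₀ * (H * H) + c₂ * (2 * (ENNReal.ofReal Iε * IK)) := by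
    simp_rw [hinner]
    rw [lintegral_add_left (show Measurable (fun y : E3 => c₀ * a y * ∫⁻ z, b z) from
      (measurable_const.mul hameas).mul_const _)]
    have hterm1 : (∫⁻ y, c₀ * a y * (∫⁻ z, b z)) ≤ c₀ * (H * H) := by
      rw [lintegral_mul_const' _ _ hIBfin, lintegral_const_mul' _ _ ENNReal.ofReal_ne_top]
      calc c₀ * (∫⁻ y, a y) * (∫⁻ z, b z) ≤ c₀ * H * H := by
            gcongr
        _ = c₀ * (H * H) := by rw [mul_assoc]
    have hterm2 : (∫⁻ y, c₂ * ((n y * n y) * IK + ∫⁻ z, (n z * n z) * KK (y - z)))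
        = c₂ * (2 * (ENNReal.ofReal Iε * IK)) := by
      rw [lintegral_const_mul' _ _ ENNReal.ofReal_ne_top]
      congr 1
      rw [lintegral_add_left (show Measurable (fun y : E3 => n y * n y * IK) from
        (hnmeas.mul hnmeas).mul_const _)]
      rw [lintegral_mul_const' _ _ hIKfin.ne, hLε, hWW, two_mul]
    rw [hterm2]
    exact add_le_add hterm1 le_rfl
  have hHH : H * H = ENNReal.ofReal C * ENNReal.ofReal C
      * (ENNReal.ofReal Iε * ENNReal.ofReal e2) := by
    have hhalf : ∀ x : ℝ≥0∞, x ^ ((1:ℝ)/2) * x ^ ((1:ℝ)/2) = x := by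
      intro x
      rw [← ENNReal.rpow_add_of_nonneg _ _ (by norm_num) (by norm_num)]
      norm_num
    rw [hHdef]
    calc ENNReal.ofReal C * (ENNReal.ofReal Iε ^ ((1:ℝ)/2) * ENNReal.ofReal e2 ^ ((1:ℝ)/2))
          * (ENNReal.ofReal C * (ENNReal.ofReal Iε ^ ((1:ℝ)/2) * ENNReal.ofReal e2 ^ ((1:ℝ)/2)))
        = ENNReal.ofReal C * ENNReal.ofReal C *
          ((ENNReal.ofReal Iε ^ ((1:ℝ)/2) * ENNReal.ofReal Iε ^ ((1:ℝ)/2))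
            * (ENNReal.ofReal e2 ^ ((1:ℝ)/2) * ENNReal.ofReal e2 ^ ((1:ℝ)/2))) := by ring
      _ = ENNReal.ofReal C * ENNReal.ofReal C * (ENNReal.ofReal Iε * ENNReal.ofReal e2) := by
          rw [hhalf, hhalf]
  -- real-side final bound
  have hexp5 : Real.exp (-(γ*(A/2))) * A^5 ≤ (10/γ)^5 := by
    have h5 : (γ*A/10)^5 ≤ Real.exp (γ*(A/2)) := by
      have h := pow_div_le_exp 5 (x := γ*(A/2)) (by positivity)
      rw [show γ*(A/2)/((5:ℕ):ℝ) = γ*A/10 by push_cast; ring] at h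
      exact h
    have hpos : (0:ℝ) < (γ*A/10)^5 := by positivity
    have hinv : (Real.exp (γ*(A/2)))⁻¹ ≤ ((γ*A/10)^5)⁻¹ := by
      apply inv_anti₀ hpos h5
    calc Real.exp (-(γ*(A/2))) * A^5 = (Real.exp (γ*(A/2)))⁻¹ * A^5 := by rw [Real.exp_neg]
      _ ≤ ((γ*A/10)^5)⁻¹ * A^5 := mul_le_mul_of_nonneg_right hinv (by positivity)
      _ = (10/γ)^5 := by
          rw [div_pow, div_pow]
          field_simp
  have h6 : A^3 * Real.exp (-(γ*(A/2))) ≤ (10/γ)^5 * (1/A) := by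
    have h9 : A^4 ≤ A^5 := by
      nlinarith [mul_nonneg (pow_nonneg hA0.le 4) (sub_nonneg.mpr hA)]
    have h8 : A^4 * Real.exp (-(γ*(A/2))) ≤ (10/γ)^5 := by
      have h10 := mul_le_mul_of_nonneg_right h9 (Real.exp_pos (-(γ*(A/2)))).le
      nlinarith [hexp5]
    have h11 : A^3 * Real.exp (-(γ*(A/2))) = A^4 * Real.exp (-(γ*(A/2))) * (1/A) := by
      field_simp
    rw [h11]
    exact mul_le_mul_of_nonneg_right h8 (by positivity)
  have hreal : 2/A * (C * (C * (Iε * e2)))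
      + C^2 * Real.exp (-(γ*(A/2))) * (2 * (Iε * ((ik1+v)*A^3))) ≤ (D+1)*(1/A)*Iε := by
    have hc2nn : (0:ℝ) ≤ 2*C^2*(ik1+v)*Iε :=
      mul_nonneg (mul_nonneg (by positivity) (by linarith)) hIε0
    have h12 := mul_le_mul_of_nonneg_left h6 hc2nn
    have h13 : 2/A * (C * (C * (Iε * e2))) = (2*C^2*e2) * (1/A) * Iε := by ring
    have h14 : C^2 * Real.exp (-(γ*(A/2))) * (2 * (Iε * ((ik1+v)*A^3)))
        = (2*C^2*(ik1+v)*Iε) * (A^3 * Real.exp (-(γ*(A/2)))) := by ring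
    have h15 : (2*C^2*e2) * (1/A) * Iε + (2*C^2*(ik1+v)*Iε) * ((10/γ)^5 * (1/A))
        = D * (1/A) * Iε := by rw [hDdef]; ring
    have h16 : D * (1/A) * Iε ≤ (D+1)*(1/A)*Iε := by
      have : (0:ℝ) ≤ (1/A) * Iε := mul_nonneg (by positivity) hIε0
      nlinarith
    have h17 : (2*C^2*e2) * (1/A) * Iε ≤ (2*C^2*e2) * (1/A) * Iε := le_refl _
    rw [h13, h14]
    linarith
  have hJ2 : (∫⁻ y : E3, ∫⁻ z : E3, M y z) ≤ ENNReal.ofReal ((D+1) * (1/A) * Iε) := by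
    refine le_trans hJ1 ?_
    have hterm1 : c₀ * (H * H) = ENNReal.ofReal (2/A * (C * (C * (Iε * e2)))) := by
      rw [hHH, hc₀def]
      rw [show ENNReal.ofReal C * ENNReal.ofReal C * (ENNReal.ofReal Iε * ENNReal.ofReal e2)
          = ENNReal.ofReal C * (ENNReal.ofReal C * (ENNReal.ofReal Iε * ENNReal.ofReal e2))
          from by ring]
      rw [← ENNReal.ofReal_mul hIε0, ← ENNReal.ofReal_mul hC.le, ← ENNReal.ofReal_mul hC.le,
        ← ENNReal.ofReal_mul (by positivity : (0:ℝ) ≤ 2/A)]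
    have hterm2 : c₂ * (2 * (ENNReal.ofReal Iε * IK))
        ≤ ENNReal.ofReal (C^2 * Real.exp (-(γ*(A/2))) * (2 * (Iε * ((ik1+v)*A^3)))) := by
      calc c₂ * (2 * (ENNReal.ofReal Iε * IK))
          ≤ c₂ * (2 * (ENNReal.ofReal Iε * ENNReal.ofReal ((ik1 + v) * A^3))) := by
            gcongr
        _ = ENNReal.ofReal (C^2 * Real.exp (-(γ*(A/2))) * (2 * (Iε * ((ik1+v)*A^3)))) := by
            rw [hc₂def, ← ENNReal.ofReal_mul hIε0,
              show (2:ℝ≥0∞) = ENNReal.ofReal (2:ℝ) from by norm_num,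
              ← ENNReal.ofReal_mul (by norm_num : (0:ℝ) ≤ 2),
              ← ENNReal.ofReal_mul (by positivity : (0:ℝ) ≤ C^2 * Real.exp (-(γ*(A/2))))]
    calc c₀ * (H * H) + c₂ * (2 * (ENNReal.ofReal Iε * IK))
        ≤ ENNReal.ofReal (2/A * (C * (C * (Iε * e2))))
          + ENNReal.ofReal (C^2 * Real.exp (-(γ*(A/2))) * (2 * (Iε * ((ik1+v)*A^3)))) := by
          rw [hterm1]
          exact add_le_add le_rfl hterm2
      _ = ENNReal.ofReal (2/A * (C * (C * (Iε * e2)))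
            + C^2 * Real.exp (-(γ*(A/2))) * (2 * (Iε * ((ik1+v)*A^3)))) := by
          rw [← ENNReal.ofReal_add (by positivity) (by positivity)]
      _ ≤ ENNReal.ofReal ((D+1) * (1/A) * Iε) := ENNReal.ofReal_le_ofReal hreal
  have hJfin : (∫⁻ y : E3, ∫⁻ z : E3, M y z) ≠ ⊤ :=
    (lt_of_le_of_lt hJ2 ENNReal.ofReal_lt_top).ne
  -- pointwise bound
  set G : E3 → E3 → ℝ := fun y z =>
      (ε y * (starRingEnd ℂ) (R₁ y)).re * (ε z * (starRingEnd ℂ) (R₂ z)).re / ‖y - z‖ with hGdef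
  have hfbound : ∀ w : E3,
      |(ε w * (starRingEnd ℂ) (R₁ w)).re| ≤ C * ‖ε w‖ * Real.exp (-γ * ‖w - α₁‖) := by
    intro w
    calc |(ε w * (starRingEnd ℂ) (R₁ w)).re| ≤ ‖ε w * (starRingEnd ℂ) (R₁ w)‖ :=
        Complex.abs_re_le_norm _
      _ = ‖ε w‖ * ‖R₁ w‖ := by rw [norm_mul, RCLike.norm_conj]
      _ ≤ ‖ε w‖ * (C * Real.exp (-γ * ‖w - α₁‖)) :=
        mul_le_mul_of_nonneg_left (hR₁ w) (norm_nonneg _)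
      _ = C * ‖ε w‖ * Real.exp (-γ * ‖w - α₁‖) := by ring
  have hgbound : ∀ w : E3,
      |(ε w * (starRingEnd ℂ) (R₂ w)).re| ≤ C * ‖ε w‖ * Real.exp (-γ * ‖w - α₂‖) := by
    intro w
    calc |(ε w * (starRingEnd ℂ) (R₂ w)).re| ≤ ‖ε w * (starRingEnd ℂ) (R₂ w)‖ :=
        Complex.abs_re_le_norm _
      _ = ‖ε w‖ * ‖R₂ w‖ := by rw [norm_mul, RCLike.norm_conj]
      _ ≤ ‖ε w‖ * (C * Real.exp (-γ * ‖w - α₂‖)) :=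
        mul_le_mul_of_nonneg_left (hR₂ w) (norm_nonneg _)
      _ = C * ‖ε w‖ * Real.exp (-γ * ‖w - α₂‖) := by ring
  have hptwise : ∀ y z : E3, ‖εm y‖ = ‖ε y‖ → ‖εm z‖ = ‖ε z‖ →
      ENNReal.ofReal ‖G y z‖ ≤ M y z := by
    intro y z hy hz
    have hf := hfbound y
    have hg := hgbound z
    have hGabs : ‖G y z‖
        = |(ε y * (starRingEnd ℂ) (R₁ y)).re * (ε z * (starRingEnd ℂ) (R₂ z)).re| * ‖y - z‖⁻¹ := by
      simp only [hGdef]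
      rw [Real.norm_eq_abs, abs_div, div_eq_mul_inv, abs_of_nonneg (norm_nonneg _)]
    have hfg : |(ε y * (starRingEnd ℂ) (R₁ y)).re * (ε z * (starRingEnd ℂ) (R₂ z)).re|
        ≤ (C * ‖ε y‖ * Real.exp (-γ * ‖y - α₁‖)) * (C * ‖ε z‖ * Real.exp (-γ * ‖z - α₂‖)) := by
      rw [abs_mul]
      exact mul_le_mul hf hg (abs_nonneg _)
        (mul_nonneg (mul_nonneg hC.le (norm_nonneg _)) (Real.exp_pos _).le)
    by_cases hrA : A/2 ≤ ‖y - z‖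
    · have hrpos : 0 < ‖y - z‖ := lt_of_lt_of_le (by linarith) hrA
      have hrinv : ‖y - z‖⁻¹ ≤ 2/A := by
        rw [show (2/A : ℝ) = (A/2)⁻¹ by rw [inv_div]]
        exact inv_anti₀ (by linarith) hrA
      have hb : ‖G y z‖ ≤ (2/A) * ((C * ‖ε y‖ * Real.exp (-γ * ‖y - α₁‖))
          * (C * ‖ε z‖ * Real.exp (-γ * ‖z - α₂‖))) := by
        rw [hGabs, mul_comm]
        apply mul_le_mul hrinv hfg (abs_nonneg _) (le_of_lt (div_pos two_pos hA0))
      calc ENNReal.ofReal ‖G y z‖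
          ≤ ENNReal.ofReal ((2/A) * ((C * ‖ε y‖ * Real.exp (-γ * ‖y - α₁‖))
              * (C * ‖ε z‖ * Real.exp (-γ * ‖z - α₂‖)))) := ENNReal.ofReal_le_ofReal hb
        _ = c₀ * (a y * b z) := by
            simp only [hc₀def, hadef, hbdef, hndef, hee₁def, hee₂def]
            rw [ENNReal.ofReal_mul (le_of_lt (div_pos two_pos hA0))]
            congr 1
            rw [ENNReal.ofReal_mul (mul_nonneg (mul_nonneg hC.le (norm_nonneg _)) (Real.exp_pos _).le)]
            congr 1
            · rw [ENNReal.ofReal_mul (mul_nonneg hC.le (norm_nonneg _)),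
                ENNReal.ofReal_mul hC.le, hy]
            · rw [ENNReal.ofReal_mul (mul_nonneg hC.le (norm_nonneg _)),
                ENNReal.ofReal_mul hC.le, hz]
        _ ≤ M y z := by simp only [hMdef]; exact self_le_add_right _ _
    · push_neg at hrA
      by_cases hyz : ‖y - z‖ = 0
      · have hG0 : G y z = 0 := by
          simp only [hGdef]
          rw [hyz, div_zero]
        rw [hG0]
        simp
      · have hrpos : 0 < ‖y - z‖ := lt_of_le_of_ne (norm_nonneg _) (Ne.symm hyz)
        have hd : A ≤ ‖y - α₁‖ + ‖z - α₂‖ + ‖y - z‖ := by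
          have hdecomp : α₂ - α₁ = (α₂ - z) + ((z - y) + (y - α₁)) := by abel
          rw [hAdef, hdecomp]
          calc ‖(α₂ - z) + ((z - y) + (y - α₁))‖
              ≤ ‖α₂ - z‖ + ‖(z - y) + (y - α₁)‖ := norm_add_le _ _
            _ ≤ ‖α₂ - z‖ + (‖z - y‖ + ‖y - α₁‖) :=
              add_le_add le_rfl (norm_add_le _ _)
            _ = ‖y - α₁‖ + ‖z - α₂‖ + ‖y - z‖ := by
                rw [norm_sub_rev α₂ z, norm_sub_rev z y]
                ring
        have hsum : A/2 ≤ ‖y - α₁‖ + ‖z - α₂‖ := by linarith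
        have hee : Real.exp (-γ * ‖y - α₁‖) * Real.exp (-γ * ‖z - α₂‖)
            ≤ Real.exp (-(γ * (A/2))) := by
          rw [← Real.exp_add]
          apply Real.exp_le_exp.mpr
          have := mul_le_mul_of_nonneg_left hsum hγ.le
          nlinarith
        have h1 : ‖ε y‖ * ‖ε z‖ ≤ ‖ε y‖^2 + ‖ε z‖^2 := by
          nlinarith [sq_nonneg (‖ε y‖ - ‖ε z‖), sq_nonneg (‖ε y‖ + ‖ε z‖)]
        have hprod : (C * ‖ε y‖ * Real.exp (-γ * ‖y - α₁‖))
              * (C * ‖ε z‖ * Real.exp (-γ * ‖z - α₂‖))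
            ≤ C^2 * Real.exp (-(γ * (A/2))) * (‖ε y‖^2 + ‖ε z‖^2) := by
          calc (C * ‖ε y‖ * Real.exp (-γ * ‖y - α₁‖)) * (C * ‖ε z‖ * Real.exp (-γ * ‖z - α₂‖))
              = (C*C) * ((Real.exp (-γ * ‖y - α₁‖) * Real.exp (-γ * ‖z - α₂‖))
                  * (‖ε y‖ * ‖ε z‖)) := by ring
            _ ≤ (C*C) * (Real.exp (-(γ * (A/2))) * (‖ε y‖^2 + ‖ε z‖^2)) := by
                apply mul_le_mul_of_nonneg_left _ (mul_nonneg hC.le hC.le)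
                exact mul_le_mul hee h1 (mul_nonneg (norm_nonneg _) (norm_nonneg _))
                  (Real.exp_pos _).le
            _ = C^2 * Real.exp (-(γ * (A/2))) * (‖ε y‖^2 + ‖ε z‖^2) := by ring
        have hb : ‖G y z‖ ≤ (C^2 * Real.exp (-(γ * (A/2))) * (‖ε y‖^2 + ‖ε z‖^2)) * ‖y - z‖⁻¹ := by
          rw [hGabs]
          exact mul_le_mul_of_nonneg_right (le_trans hfg hprod) (inv_nonneg.mpr (norm_nonneg _))
        have hKKge : ENNReal.ofReal (‖y - z‖⁻¹) ≤ KK (y - z) := by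
          by_cases h1' : ‖y - z‖ ≤ 1
          · have hmem : y - z ∈ closedBall (0:E3) 1 := mem_closedBall_zero_iff.mpr h1'
            calc ENNReal.ofReal (‖y - z‖⁻¹)
                = (closedBall (0:E3) 1).indicator (fun w => ENNReal.ofReal ‖w‖⁻¹) (y - z) := by
                  rw [Set.indicator_of_mem hmem]
              _ ≤ KK (y - z) := by simp only [hKKdef]; exact self_le_add_right _ _
          · push_neg at h1'
            have hmem : y - z ∈ closedBall (0:E3) (A/2) := mem_closedBall_zero_iff.mpr hrA.le
            have h2' : ENNReal.ofReal (‖y - z‖⁻¹) ≤ 1 := by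
              apply ENNReal.ofReal_le_one.mpr
              simpa using inv_anti₀ one_pos h1'.le
            calc ENNReal.ofReal (‖y - z‖⁻¹) ≤ 1 := h2'
              _ = (closedBall (0:E3) (A/2)).indicator (1 : E3 → ℝ≥0∞) (y - z) := by
                  rw [Set.indicator_of_mem hmem, Pi.one_apply]
              _ ≤ KK (y - z) := by simp only [hKKdef]; exact le_add_self
        calc ENNReal.ofReal ‖G y z‖
            ≤ ENNReal.ofReal ((C^2 * Real.exp (-(γ * (A/2))) * (‖ε y‖^2 + ‖ε z‖^2))
                * ‖y - z‖⁻¹) := ENNReal.ofReal_le_ofReal hb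
          _ = ENNReal.ofReal (C^2 * Real.exp (-(γ * (A/2))) * (‖ε y‖^2 + ‖ε z‖^2))
              * ENNReal.ofReal (‖y - z‖⁻¹) := ENNReal.ofReal_mul (by positivity)
          _ ≤ (c₂ * (n y * n y + n z * n z)) * KK (y - z) := by
              apply mul_le_mul' (le_of_eq ?_) hKKge
              rw [ENNReal.ofReal_mul (by positivity), hc₂def]
              congr 1
              rw [ENNReal.ofReal_add (by positivity) (by positivity)]
              simp only [hndef]
              congr 1
              · rw [← hy, pow_two, ENNReal.ofReal_mul (norm_nonneg _)]
              · rw [← hz, pow_two, ENNReal.ofReal_mul (norm_nonneg _)]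
          _ ≤ M y z := by
              simp only [hMdef]
              rw [mul_assoc]
              exact le_add_self
  -- assembly
  have haeN : ∀ᵐ w : E3 ∂(volume : Measure E3), ‖εm w‖ = ‖ε w‖ := by
    filter_upwards [hεmeq] with w hw
    rw [hw]
  have haefin : ∀ᵐ y : E3 ∂(volume : Measure E3), (∫⁻ z, M y z) < ⊤ :=
    ae_lt_top (hMprod.lintegral_prod_right') hJfin
  have hstep2 : (∫⁻ y, ENNReal.ofReal ‖∫ z, G y z‖) ≤ ∫⁻ y, ∫⁻ z, M y z := by
    apply lintegral_mono_ae
    filter_upwards [haefin, haeN] with y hyfin hy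
    apply ENNReal.ofReal_le_of_le_toReal
    calc ‖∫ z, G y z‖ ≤ (∫⁻ z, ENNReal.ofReal ‖G y z‖).toReal :=
        norm_integral_le_lintegral_norm _
      _ ≤ (∫⁻ z, M y z).toReal := by
          apply ENNReal.toReal_mono hyfin.ne
          apply lintegral_mono_ae
          filter_upwards [haeN] with z hz
          exact hptwise y z hy hz
  have hfinal : |∫ y : E3, ∫ z : E3, G y z| ≤ (D+1) * (1/A) * Iε := by
    rw [← Real.norm_eq_abs]
    calc ‖∫ y : E3, ∫ z : E3, G y z‖ ≤ (∫⁻ y, ENNReal.ofReal ‖∫ z, G y z‖).toReal :=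
        norm_integral_le_lintegral_norm _
      _ ≤ (D+1) * (1/A) * Iε := by
          apply ENNReal.toReal_le_of_le_ofReal
          · exact mul_nonneg (mul_nonneg (by linarith) (by positivity)) hIε0
          · exact le_trans hstep2 hJ2
  calc |∫ y : E3, ∫ z : E3, G y z| ≤ (D+1) * (1/A) * Iε := hfinal
    _ ≤ (D+1) * (1/A + A ^ ((1:ℝ)/2) * Real.exp (-A/4)) * Iε := by
        apply mul_le_mul_of_nonneg_right _ hIε0
        apply mul_le_mul_of_nonneg_left _ (by linarith : (0:ℝ) ≤ D+1)
        exact le_add_of_nonneg_right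
          (mul_nonneg (Real.rpow_nonneg hA0.le _) (Real.exp_pos _).le)
end
end

section
/- Let (λ₁, λ₂, α, β): [T₀,∞) → ℝ×ℝ×ℝ³×ℝ³ be C¹ and satisfy |\dot λ₁ − \dot λ₂| ≤ C[‖β‖/‖α‖² · |λ₁ − λ₂| + 1/‖α‖³], with ‖α(t)‖ ≥ c t^{2/3}, ‖β(t)‖ ≤ C t^{−1/3}, and λ₁(t) − λ₂(t) → 0 as t → ∞. Then |λ₁(t) − λ₂(t)| ≤ C'/t for all t ≥ T₀. -/
open Filter MeasureTheory Set intervalIntegral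
noncomputable section

/-- Bootstrap/Grönwall estimate for the difference of the scaling parameters in the
parabolic regime: `|λ₁(t) − λ₂(t)| ≤ C'/t`. -/
theorem stmt17 (T₀ c C : ℝ) (hT₀ : 1 ≤ T₀) (hc : 0 < c) (hC : 0 < C)
    (l₁ l₂ : ℝ → ℝ) (d₁ d₂ : ℝ → ℝ) (α β : ℝ → E3)
    (hl₁ : ∀ t ≥ T₀, HasDerivAt l₁ (d₁ t) t)
    (hl₂ : ∀ t ≥ T₀, HasDerivAt l₂ (d₂ t) t)
    (hdiff : ∀ t ≥ T₀, |d₁ t - d₂ t|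
      ≤ C * (‖β t‖ / ‖α t‖ ^ 2 * |l₁ t - l₂ t| + 1 / ‖α t‖ ^ 3))
    (hα : ∀ t ≥ T₀, ‖α t‖ ≥ c * t ^ ((2:ℝ)/3))
    (hβ : ∀ t ≥ T₀, ‖β t‖ ≤ C * t ^ (-(1:ℝ)/3))
    (hlim : Tendsto (fun t => l₁ t - l₂ t) atTop (nhds 0)) :
    ∃ C' > (0:ℝ), ∀ t ≥ T₀, |l₁ t - l₂ t| ≤ C' / t := by
  set f : ℝ → ℝ := fun t => l₁ t - l₂ t with hf_def
  set d : ℝ → ℝ := fun t => d₁ t - d₂ t with hd_def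
  have hf : ∀ t ≥ T₀, HasDerivAt f (d t) t := fun t ht => (hl₁ t ht).sub (hl₂ t ht)
  have hT₀0 : (0:ℝ) < T₀ := lt_of_lt_of_le one_pos hT₀
  set A : ℝ := C^2 / c^2 with hA_def
  set B : ℝ := C / c^3 with hB_def
  have hA : 0 < A := by positivity
  have hB : 0 < B := by positivity
  -- pointwise derivative bound
  have hd_bound : ∀ u ≥ T₀, |d u| ≤ A * u ^ (-(5:ℝ)/3) * |f u| + B * u ^ (-(2:ℝ)) := by
    intro u hu
    have hu1 : (1:ℝ) ≤ u := le_trans hT₀ hu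
    have hu0 : (0:ℝ) < u := lt_of_lt_of_le one_pos hu1
    have hαu := hα u hu
    have hβu := hβ u hu
    have hαpos : 0 < ‖α u‖ := lt_of_lt_of_le (by positivity) hαu
    have h1 : ‖β u‖ / ‖α u‖ ^ 2 ≤ (C / c^2) * u ^ (-(5:ℝ)/3) := by
      have hsq : (c * u ^ ((2:ℝ)/3))^2 ≤ ‖α u‖^2 := by
        apply pow_le_pow_left₀ (by positivity) hαu
      have hd2 : (0:ℝ) < (c * u ^ ((2:ℝ)/3))^2 := by positivity
      calc ‖β u‖ / ‖α u‖ ^ 2 ≤ (C * u ^ (-(1:ℝ)/3)) / (c * u ^ ((2:ℝ)/3))^2 := by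
            apply div_le_div₀ (by positivity) hβu hd2 hsq
        _ = (C / c^2) * u ^ (-(5:ℝ)/3) := by
            rw [mul_pow, ← Real.rpow_natCast (u ^ ((2:ℝ)/3)) 2, ← Real.rpow_mul hu0.le]
            rw [div_eq_mul_inv, mul_inv, div_eq_mul_inv, mul_mul_mul_comm]
            congr 1
            rw [← Real.rpow_neg hu0.le, ← Real.rpow_add hu0]
            norm_num
    have h2 : 1 / ‖α u‖ ^ 3 ≤ (1 / c^3) * u ^ (-(2:ℝ)) := by
      have hcu : (c * u ^ ((2:ℝ)/3))^3 ≤ ‖α u‖^3 := by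
        apply pow_le_pow_left₀ (by positivity) hαu
      have hd3 : (0:ℝ) < (c * u ^ ((2:ℝ)/3))^3 := by positivity
      calc 1 / ‖α u‖ ^ 3 ≤ 1 / (c * u ^ ((2:ℝ)/3))^3 :=
            one_div_le_one_div_of_le hd3 hcu
        _ = (1 / c^3) * u ^ (-(2:ℝ)) := by
            rw [mul_pow, ← Real.rpow_natCast (u ^ ((2:ℝ)/3)) 3, ← Real.rpow_mul hu0.le]
            rw [one_div, mul_inv, ← Real.rpow_neg hu0.le, one_div, div_eq_mul_inv]
            norm_num
    have habs : (0:ℝ) ≤ |f u| := abs_nonneg _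
    calc |d u| ≤ C * (‖β u‖ / ‖α u‖ ^ 2 * |f u| + 1 / ‖α u‖ ^ 3) := hdiff u hu
      _ ≤ C * ((C / c^2) * u ^ (-(5:ℝ)/3) * |f u| + (1 / c^3) * u ^ (-(2:ℝ))) := by
          gcongr
      _ = A * u ^ (-(5:ℝ)/3) * |f u| + B * u ^ (-(2:ℝ)) := by
          rw [hA_def, hB_def]; ring
  -- continuity
  have hf_cont : ContinuousOn f (Ici T₀) := fun t ht =>
    ((hf t ht).continuousAt).continuousWithinAt
  -- global bound
  obtain ⟨M₀, hM₀pos, hM₀⟩ : ∃ M₀ > 0, ∀ t ≥ T₀, |f t| ≤ M₀ := by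
    obtain ⟨N, hN⟩ := Metric.tendsto_atTop.mp hlim 1 one_pos
    obtain ⟨K, hK⟩ := (isCompact_Icc (a := T₀) (b := max T₀ N)).exists_bound_of_continuousOn
      (hf_cont.mono (fun x hx => hx.1))
    refine ⟨max K 1, lt_of_lt_of_le one_pos (le_max_right _ _), fun t ht => ?_⟩
    rcases le_total t (max T₀ N) with h | h
    · exact le_trans (hK t ⟨ht, h⟩) (le_max_left _ _)
    · have := hN t (le_trans (le_max_right _ _) h)
      rw [Real.dist_eq, sub_zero] at this
      exact le_trans this.le (le_max_right _ _)
    -- key integral estimate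
  have key : ∀ m, 0 ≤ m → ∀ t ≥ T₀, (∀ u, t ≤ u → |f u| ≤ m) → ∀ s, t ≤ s →
      |f t| ≤ |f s| + (3/2) * A * m * t ^ (-(2:ℝ)/3) + B / t := by
    intro m hm t ht hmb s hts
    have ht1 : (1:ℝ) ≤ t := le_trans hT₀ ht
    have ht0 : (0:ℝ) < t := lt_of_lt_of_le one_pos ht1
    have hs0 : (0:ℝ) < s := lt_of_lt_of_le ht0 hts
    -- bound for d on [t,s]
    have hdb : ∀ u ∈ Icc t s, |d u| ≤ A * m * u ^ (-(5:ℝ)/3) + B * u ^ (-(2:ℝ)) := by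
      intro u hu
      have huT : T₀ ≤ u := le_trans ht hu.1
      have := hd_bound u huT
      have hrp : (0:ℝ) ≤ u ^ (-(5:ℝ)/3) := Real.rpow_nonneg (by linarith [hu.1]) _
      have h2 : A * u ^ (-(5:ℝ)/3) * |f u| ≤ A * m * u ^ (-(5:ℝ)/3) := by
        calc A * u ^ (-(5:ℝ)/3) * |f u| ≤ A * u ^ (-(5:ℝ)/3) * m :=
              mul_le_mul_of_nonneg_left (hmb u hu.1) (mul_nonneg hA.le hrp)
          _ = A * m * u ^ (-(5:ℝ)/3) := by ring
      linarith
    have hdconst : ∀ u ∈ Icc t s, |d u| ≤ A * m + B := by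
      intro u hu
      have hu1 : (1:ℝ) ≤ u := le_trans ht1 hu.1
      have r1 : u ^ (-(5:ℝ)/3) ≤ 1 := Real.rpow_le_one_of_one_le_of_nonpos hu1 (by norm_num)
      have r2 : u ^ (-(2:ℝ)) ≤ 1 := Real.rpow_le_one_of_one_le_of_nonpos hu1 (by norm_num)
      have r3 : (0:ℝ) ≤ u ^ (-(5:ℝ)/3) := Real.rpow_nonneg (by linarith) _
      have r4 : (0:ℝ) ≤ u ^ (-(2:ℝ)) := Real.rpow_nonneg (by linarith) _
      have := hdb u hu
      have q1 : A * m * u ^ (-(5:ℝ)/3) ≤ A * m * 1 :=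
        mul_le_mul_of_nonneg_left r1 (mul_nonneg hA.le hm)
      have q2 : B * u ^ (-(2:ℝ)) ≤ B * 1 := mul_le_mul_of_nonneg_left r2 hB.le
      linarith
    -- integrability of d
    have hdint : IntervalIntegrable d volume t s := by
      rw [intervalIntegrable_iff_integrableOn_Ioc_of_le hts]
      have heqd : ∀ u ∈ Ioc t s, d u = deriv f u := by
        intro u hu
        exact ((hf u (le_trans ht hu.1.le)).deriv).symm
      rw [integrableOn_congr_fun heqd measurableSet_Ioc]
      apply Integrable.mono' (g := fun _ => A * m + B)
      · exact integrableOn_const (measure_Ioc_lt_top).ne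
      · exact (measurable_deriv f).aestronglyMeasurable.restrict
      · filter_upwards [ae_restrict_mem measurableSet_Ioc] with u hu
        rw [Real.norm_eq_abs, (hf u (le_trans ht hu.1.le)).deriv]
        exact hdconst u ⟨hu.1.le, hu.2⟩
    -- FTC
    have heq : ∫ u in t..s, d u = f s - f t :=
      intervalIntegral.integral_eq_sub_of_hasDerivAt
        (fun u hu => hf u (le_trans ht (by rw [uIcc_of_le hts] at hu; exact hu.1))) hdint
    -- integrable comparison function
    have hcont53 : ContinuousOn (fun u : ℝ => u ^ (-(5:ℝ)/3)) (Icc t s) := by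
      intro u hu
      exact (Real.continuousAt_rpow_const u _ (Or.inl (ne_of_gt (lt_of_lt_of_le ht0 hu.1)))).continuousWithinAt
    have hcont2 : ContinuousOn (fun u : ℝ => u ^ (-(2:ℝ))) (Icc t s) := by
      intro u hu
      exact (Real.continuousAt_rpow_const u _ (Or.inl (ne_of_gt (lt_of_lt_of_le ht0 hu.1)))).continuousWithinAt
    have hg1int : IntervalIntegrable (fun u : ℝ => A * m * u ^ (-(5:ℝ)/3)) volume t s := by
      apply ContinuousOn.intervalIntegrable
      rw [uIcc_of_le hts]
      exact (continuousOn_const.mul hcont53)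
    have hg2int : IntervalIntegrable (fun u : ℝ => B * u ^ (-(2:ℝ))) volume t s := by
      apply ContinuousOn.intervalIntegrable
      rw [uIcc_of_le hts]
      exact (continuousOn_const.mul hcont2)
    have hgint := hg1int.add hg2int
    -- |∫ d| ≤ ∫ g
    have h1 : |∫ u in t..s, d u| ≤ ∫ u in t..s, |d u| :=
      intervalIntegral.abs_integral_le_integral_abs hts
    have h2 : ∫ u in t..s, |d u| ≤ ∫ u in t..s,
        (A * m * u ^ (-(5:ℝ)/3) + B * u ^ (-(2:ℝ))) := by
      apply intervalIntegral.integral_mono_on hts hdint.abs hgint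
      exact hdb
    -- compute the integral
    have hzero : (0:ℝ) ∉ Set.uIcc t s := by
      rw [uIcc_of_le hts]; intro h; exact absurd h.1 (by linarith)
    have i53 : ∫ u in t..s, u ^ (-(5:ℝ)/3) = (s ^ (-(2:ℝ)/3) - t ^ (-(2:ℝ)/3)) / (-(2:ℝ)/3) := by
      rw [integral_rpow (Or.inr ⟨by norm_num, hzero⟩)]
      norm_num
    have i2 : ∫ u in t..s, u ^ (-(2:ℝ)) = (s ^ (-(1:ℝ)) - t ^ (-(1:ℝ))) / (-(1:ℝ)) := by
      rw [integral_rpow (Or.inr ⟨by norm_num, hzero⟩)]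
      norm_num
    have h3 : ∫ u in t..s, (A * m * u ^ (-(5:ℝ)/3) + B * u ^ (-(2:ℝ)))
        = A * m * ((s ^ (-(2:ℝ)/3) - t ^ (-(2:ℝ)/3)) / (-(2:ℝ)/3))
          + B * ((s ^ (-(1:ℝ)) - t ^ (-(1:ℝ))) / (-(1:ℝ))) := by
      rw [intervalIntegral.integral_add hg1int hg2int,
        intervalIntegral.integral_const_mul, intervalIntegral.integral_const_mul, i53, i2]
    have hs23 : (0:ℝ) ≤ s ^ (-(2:ℝ)/3) := Real.rpow_nonneg hs0.le _
    have hs1 : (0:ℝ) ≤ s ^ (-(1:ℝ)) := Real.rpow_nonneg hs0.le _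
    have ht1' : t ^ (-(1:ℝ)) = 1 / t := by rw [Real.rpow_neg_one]; exact (one_div t).symm
    have hfin : |f t| ≤ |f s| + |∫ u in t..s, d u| := by
      have : f t = f s - (f s - f t) := by ring
      calc |f t| = |f s - (f s - f t)| := by rw [← this]
        _ ≤ |f s| + |f s - f t| := abs_sub _ _
        _ = |f s| + |∫ u in t..s, d u| := by rw [heq]
    have h23nn : (0:ℝ) ≤ t ^ (-(2:ℝ)/3) := Real.rpow_nonneg ht0.le _
    calc |f t| ≤ |f s| + |∫ u in t..s, d u| := hfin
      _ ≤ |f s| + (A * m * ((s ^ (-(2:ℝ)/3) - t ^ (-(2:ℝ)/3)) / (-(2:ℝ)/3))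
          + B * ((s ^ (-(1:ℝ)) - t ^ (-(1:ℝ))) / (-(1:ℝ)))) := by
        rw [← h3]; linarith
      _ ≤ |f s| + (3/2) * A * m * t ^ (-(2:ℝ)/3) + B / t := by
        rw [ht1']
        have p1 : (0:ℝ) ≤ A * m * s ^ (-(2:ℝ)/3) :=
          mul_nonneg (mul_nonneg hA.le hm) hs23
        have p2 : (0:ℝ) ≤ B * s ^ (-(1:ℝ)) := mul_nonneg hB.le hs1
        have e1 : A * m * ((s ^ (-(2:ℝ)/3) - t ^ (-(2:ℝ)/3)) / (-(2:ℝ)/3))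
            = (3/2) * A * m * t ^ (-(2:ℝ)/3) - (3/2) * (A * m * s ^ (-(2:ℝ)/3)) := by
          ring
        have e2 : B * ((s ^ (-(1:ℝ)) - 1/t) / (-(1:ℝ))) = B / t - B * s ^ (-(1:ℝ)) := by
          rw [div_neg, div_one, mul_neg, mul_sub, mul_one_div]
          ring
        rw [e1, e2]
        linarith
    -- limit version
  have habs0 : Tendsto (fun s => |f s|) atTop (nhds 0) := by
    have := hlim.abs
    rwa [abs_zero] at this
  have key2 : ∀ m, 0 ≤ m → ∀ t ≥ T₀, (∀ u, t ≤ u → |f u| ≤ m) →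
      |f t| ≤ (3/2) * A * m * t ^ (-(2:ℝ)/3) + B / t := by
    intro m hm t ht hmb
    have h1 : ∀ s ≥ t, |f t| - ((3/2) * A * m * t ^ (-(2:ℝ)/3) + B / t) ≤ |f s| := by
      intro s hs
      have := key m hm t ht hmb s hs
      linarith
    have h2 : |f t| - ((3/2) * A * m * t ^ (-(2:ℝ)/3) + B / t) ≤ 0 :=
      ge_of_tendsto habs0 (eventually_atTop.mpr ⟨t, h1⟩)
    linarith
  -- choose threshold T₁
  set T₁ : ℝ := max T₀ ((3 * A) ^ ((3:ℝ)/2)) with hT₁_def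
  have hT₁T₀ : T₀ ≤ T₁ := le_max_left _ _
  have hT₁pos : 0 < T₁ := lt_of_lt_of_le hT₀0 hT₁T₀
  have hsmall : ∀ t, T₁ ≤ t → (3/2) * A * t ^ (-(2:ℝ)/3) ≤ 1/2 := by
    intro t ht
    have ht0 : (0:ℝ) < t := lt_of_lt_of_le hT₁pos ht
    have h3A : (3 * A) ≤ t ^ ((2:ℝ)/3) := by
      have h1 : (3 * A) ^ ((3:ℝ)/2) ≤ t := le_trans (le_max_right _ _) ht
      have h2 : ((3 * A) ^ ((3:ℝ)/2)) ^ ((2:ℝ)/3) ≤ t ^ ((2:ℝ)/3) :=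
        Real.rpow_le_rpow (Real.rpow_nonneg (by positivity) _) h1 (by norm_num)
      rwa [← Real.rpow_mul (by positivity : (0:ℝ) ≤ 3 * A),
        show (3:ℝ)/2 * (2/3) = 1 by norm_num, Real.rpow_one] at h2
    have hP0 : (0:ℝ) < t ^ ((2:ℝ)/3) := Real.rpow_pos_of_pos ht0 _
    have hinv : t ^ (-(2:ℝ)/3) = (t ^ ((2:ℝ)/3))⁻¹ := by
      rw [← Real.rpow_neg ht0.le]; norm_num
    rw [hinv]
    have hmul : t ^ ((2:ℝ)/3) * (t ^ ((2:ℝ)/3))⁻¹ = 1 := mul_inv_cancel₀ hP0.ne'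
    nlinarith [inv_pos.mpr hP0, h3A, hmul]
  -- sup argument: for t₀ ≥ T₁, |f t₀| ≤ 2B/t₀
  have hmain : ∀ t₀, T₁ ≤ t₀ → |f t₀| ≤ 2 * B / t₀ := by
    intro t₀ ht₀
    have ht₀T₀ : T₀ ≤ t₀ := le_trans hT₁T₀ ht₀
    have ht₀0 : (0:ℝ) < t₀ := lt_of_lt_of_le hT₁pos ht₀
    set S : Set ℝ := (fun u => |f u|) '' Ici t₀ with hS_def
    have hSne : S.Nonempty := ⟨|f t₀|, t₀, Set.self_mem_Ici, rfl⟩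
    have hSbdd : BddAbove S := by
      refine ⟨M₀, fun x hx => ?_⟩
      obtain ⟨u, hu, rfl⟩ := hx
      exact hM₀ u (le_trans ht₀T₀ hu)
    set m : ℝ := sSup S with hm_def
    have hub : ∀ u, t₀ ≤ u → |f u| ≤ m := fun u hu => le_csSup hSbdd ⟨u, hu, rfl⟩
    have hm0 : 0 ≤ m := le_trans (abs_nonneg _) (hub t₀ le_rfl)
    have hstep : ∀ u, t₀ ≤ u → |f u| ≤ (1/2) * m + B / t₀ := by
      intro u hu
      have huT₀ : T₀ ≤ u := le_trans ht₀T₀ hu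
      have hu0 : (0:ℝ) < u := lt_of_lt_of_le ht₀0 hu
      have h1 : |f u| ≤ (3/2) * A * m * u ^ (-(2:ℝ)/3) + B / u :=
        key2 m hm0 u huT₀ (fun v hv => hub v (le_trans hu hv))
      have h2 : (3/2) * A * m * u ^ (-(2:ℝ)/3) ≤ (1/2) * m := by
        have := hsmall u (le_trans ht₀ hu)
        have hrp : (0:ℝ) ≤ u ^ (-(2:ℝ)/3) := Real.rpow_nonneg hu0.le _
        nlinarith
      have h3 : B / u ≤ B / t₀ := div_le_div_of_nonneg_left hB.le ht₀0 hu
      linarith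
    have hmle : m ≤ (1/2) * m + B / t₀ := by
      apply csSup_le hSne
      rintro x ⟨u, hu, rfl⟩
      exact hstep u hu
    have : m ≤ 2 * B / t₀ := by
      have h2 : m ≤ 2 * (B / t₀) := by linarith
      rwa [show 2 * (B / t₀) = 2 * B / t₀ from by ring] at h2
    exact le_trans (hub t₀ le_rfl) this
  -- conclusion
  refine ⟨max (2 * B) (M₀ * T₁), lt_of_lt_of_le (by positivity) (le_max_left _ _),
    fun t ht => ?_⟩
  have ht0 : (0:ℝ) < t := lt_of_lt_of_le hT₀0 ht
  show |f t| ≤ _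
  rcases le_total T₁ t with h | h
  · calc |f t| ≤ 2 * B / t := hmain t h
      _ ≤ max (2 * B) (M₀ * T₁) / t := by
        gcongr
        exact le_max_left _ _
  · calc |f t| ≤ M₀ := hM₀ t ht
      _ ≤ M₀ * T₁ / t := by
        rw [le_div_iff₀ ht0]
        exact mul_le_mul_of_nonneg_left h hM₀pos.le
      _ ≤ max (2 * B) (M₀ * T₁) / t := by
        gcongr
        exact le_max_right _ _
end
end
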